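/- Let ρ be a positive semidefinite matrix on H_A ⊗ H_B, where H_A = ℂ^{D_A} and H_B = ℂ^{D_B}, and let ρ_A = Tr_B ρ. Then ρ ≤ D_B · (ρ_A ⊗ I_B) in the Löwner order, where I_B is the identity on H_B. -/

import Mathlib

open Matrix
open scoped Kronecker ComplexOrder

noncomputable section

/-- Apply a real function to the spectrum of a Hermitian matrix via the spectral
(continuous functional) calculus; junk value `0` if the matrix is not Hermitian. -/
def matFun {n : Type*} [Fintype n] [DecidableEq n] (M : Matrix n n ℂ) (f : ℝ → ℝ) :
    Matrix n n ℂ :=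
  if hM : M.IsHermitian then
    (hM.eigenvectorUnitary : Matrix n n ℂ) *
      Matrix.diagonal (fun i => (f (hM.eigenvalues i) : ℂ)) *
        (star (hM.eigenvectorUnitary : Matrix n n ℂ))
  else 0

/-- Real (spectral) power of a matrix, with the convention `0 ^ β = 0` for `β ≠ 0`. -/
def matRpow {n : Type*} [Fintype n] [DecidableEq n] (M : Matrix n n ℂ) (β : ℝ) :
    Matrix n n ℂ :=
  matFun M (fun x => x ^ β)

/-- Trace norm (Schatten 1-norm): `‖M‖₁ = Tr √(Mᴴ M)`. -/
def traceNorm {n : Type*} [Fintype n] [DecidableEq n] (M : Matrix n n ℂ) : ℝ :=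
  (((Matrix.posSemidef_conjTranspose_mul_self M).1.eigenvectorUnitary : Matrix n n ℂ) *
    Matrix.diagonal (fun i => ((√((Matrix.posSemidef_conjTranspose_mul_self M).1.eigenvalues i) : ℝ) : ℂ)) *
      (star ((Matrix.posSemidef_conjTranspose_mul_self M).1.eigenvectorUnitary : Matrix n n ℂ))).trace.re

/-- Operator norm of a matrix, acting on the Euclidean (ℓ²) space. -/
def opNorm {n : Type*} [Fintype n] [DecidableEq n] (M : Matrix n n ℂ) : ℝ :=
  ‖Matrix.toEuclideanCLM (𝕜 := ℂ) M‖

/-- Partial trace over the second tensor factor. -/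
def ptraceRight {ιA ιB : Type*} [Fintype ιB] (M : Matrix (ιA × ιB) (ιA × ιB) ℂ) :
    Matrix ιA ιA ℂ :=
  Matrix.of fun a a' => ∑ b : ιB, M (a, b) (a', b)

/-- Heisenberg time evolution `ρ(t) = e^{-iHt} ρ e^{iHt}`. -/
def timeEvol {n : Type*} [Fintype n] [DecidableEq n] (H ρ : Matrix n n ℂ) (t : ℝ) :
    Matrix n n ℂ :=
  NormedSpace.exp ((-(Complex.I * (t : ℂ))) • H) * ρ *
    NormedSpace.exp ((Complex.I * (t : ℂ)) • H)

/-- Von Neumann entropy `S₁(σ) = -Tr(σ log σ)` (with the convention `0 log 0 = 0`). -/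
def entVN {n : Type*} [Fintype n] [DecidableEq n] (σ : Matrix n n ℂ) : ℝ :=
  -((matFun σ (fun x => x * Real.log x)).trace.re)

/-- α-Renyi entropy `S_α(σ) = (1/(1-α)) log Tr σ^α`. -/
def renyiEnt {n : Type*} [Fintype n] [DecidableEq n] (α : ℝ) (σ : Matrix n n ℂ) : ℝ :=
  (1 - α)⁻¹ * Real.log ((matRpow σ α).trace.re)

end


section Stmt5Aux

lemma stmt5_psd_add {n : Type*} [Fintype n] {A B : Matrix n n ℂ}
    (hA : A.PosSemidef) (hB : B.PosSemidef) : (A + B).PosSemidef := by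
  refine ⟨hA.1.add hB.1, fun x => ?_⟩
  simpa [mul_add, add_mul] using add_nonneg (hA.2 x) (hB.2 x)

lemma stmt5_psd_sum {n ι : Type*} [Fintype n] [DecidableEq n] (s : Finset ι)
    (f : ι → Matrix n n ℂ) (h : ∀ i ∈ s, (f i).PosSemidef) : (∑ i ∈ s, f i).PosSemidef := by
  classical
  induction s using Finset.induction_on with
  | empty => simpa using Matrix.PosSemidef.zero
  | insert _ _ hi ih =>
      rw [Finset.sum_insert hi]
      exact stmt5_psd_add (h _ (Finset.mem_insert_self _ _))
        (ih fun i his => h i (Finset.mem_insert_of_mem his))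

lemma stmt5_psd_real_smul {n : Type*} [Fintype n] {A : Matrix n n ℂ}
    (hA : A.PosSemidef) {c : ℝ} (hc : 0 ≤ c) : ((c : ℂ) • A).PosSemidef := by
  refine ⟨?_, fun x => ?_⟩
  · unfold Matrix.IsHermitian
    rw [conjTranspose_smul, hA.1.eq]
    norm_num
  · exact (hA.smul (show (0:ℂ) ≤ (c:ℂ) by exact_mod_cast hc)).2 x

variable (DA DB : ℕ) (ρ : Matrix (Fin DA × Fin DB) (Fin DA × Fin DB) ℂ)

/-- `1 ⊗ E_{bc}` on the bipartite space. -/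
noncomputable def stmt5T (b c : Fin DB) : Matrix (Fin DA × Fin DB) (Fin DA × Fin DB) ℂ :=
  (1 : Matrix (Fin DA) (Fin DA) ℂ) ⊗ₖ Matrix.single b c (1 : ℂ)

lemma stmt5T_conjTranspose (b c : Fin DB) : (stmt5T DA DB b c)ᴴ = stmt5T DA DB c b := by
  ext ⟨a, β⟩ ⟨a', β'⟩
  simp [stmt5T, conjTranspose_apply, Matrix.single, one_apply, eq_comm, and_comm]
  aesop

lemma stmt5T_sum_diag : ∑ b : Fin DB, stmt5T DA DB b b = 1 := by
  ext ⟨a, β⟩ ⟨a', β'⟩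
  simp [stmt5T, Matrix.sum_apply, Matrix.single, one_apply, Prod.ext_iff, ite_and,
    Finset.filter_eq', eq_comm]
  split <;> simp

lemma stmt5_claimA :
    ∑ p : Fin DB × Fin DB, stmt5T DA DB p.1 p.2 * ρ * (stmt5T DA DB p.1 p.2)ᴴ
      = (ptraceRight ρ) ⊗ₖ (1 : Matrix (Fin DB) (Fin DB) ℂ) := by
  ext ⟨a, β⟩ ⟨a', β'⟩
  simp only [stmt5T_conjTranspose]
  simp only [Matrix.sum_apply, mul_apply, stmt5T, kroneckerMap_apply,
    Fintype.sum_prod_type, Matrix.single, one_apply, ptraceRight, of_apply]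
  simp [ite_and, Finset.sum_ite_eq, Finset.sum_ite_eq']
  by_cases h : β = β' <;> simp [h, eq_comm]

/-- The pinching of `ρ`. -/
noncomputable def stmt5P : Matrix (Fin DA × Fin DB) (Fin DA × Fin DB) ℂ :=
  ∑ b : Fin DB, stmt5T DA DB b b * ρ * stmt5T DA DB b b

lemma stmt5_diag_sum :
    ∑ p ∈ Finset.univ.filter (fun p : Fin DB × Fin DB => p.1 = p.2),
        stmt5T DA DB p.1 p.2 * ρ * (stmt5T DA DB p.1 p.2)ᴴ = stmt5P DA DB ρ := by
  rw [Finset.sum_filter, Fintype.sum_prod_type]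
  simp [stmt5P, Finset.sum_ite_eq, stmt5T_conjTranspose]

lemma stmt5_claimB :
    ∑ b : Fin DB, ∑ c : Fin DB,
        (stmt5T DA DB b b - stmt5T DA DB c c) * ρ * (stmt5T DA DB b b - stmt5T DA DB c c)ᴴ
      = (DB : ℂ) • stmt5P DA DB ρ + (DB : ℂ) • stmt5P DA DB ρ - ρ - ρ := by
  have hsub : ∀ b c : Fin DB,
      (stmt5T DA DB b b - stmt5T DA DB c c)ᴴ = stmt5T DA DB b b - stmt5T DA DB c c := by
    intro b c
    rw [conjTranspose_sub, stmt5T_conjTranspose, stmt5T_conjTranspose]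
  have expand : ∀ b c : Fin DB,
      (stmt5T DA DB b b - stmt5T DA DB c c) * ρ * (stmt5T DA DB b b - stmt5T DA DB c c)ᴴ
        = stmt5T DA DB b b * ρ * stmt5T DA DB b b + stmt5T DA DB c c * ρ * stmt5T DA DB c c
          - stmt5T DA DB b b * ρ * stmt5T DA DB c c
          - stmt5T DA DB c c * ρ * stmt5T DA DB b b := by
    intro b c
    rw [hsub]
    noncomm_ring
  simp only [expand, Finset.sum_add_distrib, Finset.sum_sub_distrib]
  have hconst : ∀ M : Matrix (Fin DA × Fin DB) (Fin DA × Fin DB) ℂ,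
      ∑ _c : Fin DB, M = (DB : ℂ) • M := by
    intro M
    simp [Finset.sum_const, ← Nat.cast_smul_eq_nsmul ℂ]
  have h1 : ∑ b : Fin DB, ∑ _c : Fin DB, stmt5T DA DB b b * ρ * stmt5T DA DB b b
      = (DB : ℂ) • stmt5P DA DB ρ := by
    simp only [hconst, stmt5P, Finset.smul_sum]
  have h2 : ∑ _b : Fin DB, ∑ c : Fin DB, stmt5T DA DB c c * ρ * stmt5T DA DB c c
      = (DB : ℂ) • stmt5P DA DB ρ := by
    rw [← stmt5P]
    exact hconst _
  have h3 : ∑ b : Fin DB, ∑ c : Fin DB, stmt5T DA DB b b * ρ * stmt5T DA DB c c = ρ := by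
    have : ∀ b : Fin DB, ∑ c : Fin DB, stmt5T DA DB b b * ρ * stmt5T DA DB c c
        = stmt5T DA DB b b * ρ := by
      intro b
      rw [← Finset.mul_sum, stmt5T_sum_diag, mul_one]
    simp only [this, ← Finset.sum_mul, stmt5T_sum_diag, one_mul]
  have h4 : ∑ b : Fin DB, ∑ c : Fin DB, stmt5T DA DB c c * ρ * stmt5T DA DB b b = ρ := by
    have : ∀ b : Fin DB, ∑ c : Fin DB, stmt5T DA DB c c * ρ * stmt5T DA DB b b
        = ρ * stmt5T DA DB b b := by
      intro b
      simp only [← Finset.sum_mul, stmt5T_sum_diag, one_mul]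
    simp only [this, ← Finset.mul_sum, stmt5T_sum_diag, mul_one]
  rw [h1, h2, h3, h4]

end Stmt5Aux

/-- For positive semidefinite `ρ` on `ℂ^{D_A} ⊗ ℂ^{D_B}` with
`ρ_A = Tr_B ρ`, one has `ρ ≤ D_B (ρ_A ⊗ I_B)` in the Löwner order. -/
theorem stmt_5 (DA DB : ℕ)
    (ρ : Matrix (Fin DA × Fin DB) (Fin DA × Fin DB) ℂ) (hρ : ρ.PosSemidef) :
    ((DB : ℂ) • ((ptraceRight ρ) ⊗ₖ (1 : Matrix (Fin DB) (Fin DB) ℂ)) - ρ).PosSemidef := by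
  classical
  have hsplit := Finset.sum_filter_add_sum_filter_not Finset.univ
    (fun p : Fin DB × Fin DB => p.1 = p.2)
    (fun p => stmt5T DA DB p.1 p.2 * ρ * (stmt5T DA DB p.1 p.2)ᴴ)
  rw [stmt5_diag_sum] at hsplit
  have key : (DB : ℂ) • ((ptraceRight ρ) ⊗ₖ (1 : Matrix (Fin DB) (Fin DB) ℂ)) - ρ
      = (DB : ℂ) • (∑ p ∈ Finset.univ.filter (fun p : Fin DB × Fin DB => ¬ p.1 = p.2),
            stmt5T DA DB p.1 p.2 * ρ * (stmt5T DA DB p.1 p.2)ᴴ)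
        + ((2 : ℂ))⁻¹ • (∑ b : Fin DB, ∑ c : Fin DB,
            (stmt5T DA DB b b - stmt5T DA DB c c) * ρ *
              (stmt5T DA DB b b - stmt5T DA DB c c)ᴴ) := by
    rw [stmt5_claimB, ← stmt5_claimA DA DB ρ, ← hsplit]
    module
  rw [key]
  apply stmt5_psd_add
  · have h := stmt5_psd_real_smul
      (stmt5_psd_sum (Finset.univ.filter (fun p : Fin DB × Fin DB => ¬ p.1 = p.2))
        (fun p => stmt5T DA DB p.1 p.2 * ρ * (stmt5T DA DB p.1 p.2)ᴴ)
        fun p _ => hρ.mul_mul_conjTranspose_same _)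
      (show (0:ℝ) ≤ (DB:ℝ) from Nat.cast_nonneg _)
    rwa [Complex.ofReal_natCast] at h
  · have h := stmt5_psd_real_smul
      (stmt5_psd_sum Finset.univ
        (fun b => ∑ c : Fin DB, (stmt5T DA DB b b - stmt5T DA DB c c) * ρ *
          (stmt5T DA DB b b - stmt5T DA DB c c)ᴴ)
        fun b _ => stmt5_psd_sum Finset.univ
          (fun c => (stmt5T DA DB b b - stmt5T DA DB c c) * ρ *
            (stmt5T DA DB b b - stmt5T DA DB c c)ᴴ)
          fun c _ => hρ.mul_mul_conjTranspose_same _)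
      (show (0:ℝ) ≤ 2⁻¹ by norm_num)
    rwa [Complex.ofReal_inv, Complex.ofReal_ofNat] at h
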